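/- The assignment ω(a_{ij}) = a_{ij} if n+1 ∉ {i,j}, ω(a_{i(n+1)}) = τ_i, extends to a well-defined group homomorphism ω : G_{n+1}^2 → G_{n,D}^2. -/
import Mathlib


/-- Index type for the generators `a_{ij}`: two-element subsets of `Fin n`. -/
abbrev PairIdx (n : ℕ) := {s : Finset (Fin n) // s.card = 2}

/-- The unordered pair `{i,j}` as an index. -/
def mkPair {n : ℕ} (i j : Fin n) (h : i ≠ j) : PairIdx n := ⟨{i, j}, Finset.card_pair h⟩

/-- Relations of the group `G_n^2`. -/
def gn2Rels (n : ℕ) : Set (FreeGroup (PairIdx n)) :=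
  {r | (∃ (i j : Fin n) (h : i ≠ j),
          r = FreeGroup.of (mkPair i j h) * FreeGroup.of (mkPair i j h)) ∨
       (∃ (i j k l : Fin n) (hij : i ≠ j) (hkl : k ≠ l),
          i ≠ k ∧ i ≠ l ∧ j ≠ k ∧ j ≠ l ∧
          r = FreeGroup.of (mkPair i j hij) * FreeGroup.of (mkPair k l hkl) *
              (FreeGroup.of (mkPair i j hij))⁻¹ * (FreeGroup.of (mkPair k l hkl))⁻¹) ∨
       (∃ (i j k : Fin n) (hij : i ≠ j) (hik : i ≠ k) (hjk : j ≠ k),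
          r = FreeGroup.of (mkPair i j hij) * FreeGroup.of (mkPair i k hik) *
              FreeGroup.of (mkPair j k hjk) *
              (FreeGroup.of (mkPair j k hjk) * FreeGroup.of (mkPair i k hik) *
               FreeGroup.of (mkPair i j hij))⁻¹)}

/-- The group `G_n^2`. -/
abbrev Gn2 (n : ℕ) := PresentedGroup (gn2Rels n)

/-- The generator `a_{ij}` of `G_n^2`. -/
def A2 {n : ℕ} (i j : Fin n) (h : i ≠ j) : Gn2 n := PresentedGroup.of (mkPair i j h)

/-- Relations of the group `G_{n,P}^2` (`G_n^2` with parity). -/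
def gnP2Rels (n : ℕ) : Set (FreeGroup (PairIdx n × ZMod 2)) :=
  {r | (∃ (i j : Fin n) (h : i ≠ j) (ε : ZMod 2),
          r = FreeGroup.of (mkPair i j h, ε) * FreeGroup.of (mkPair i j h, ε)) ∨
       (∃ (i j k l : Fin n) (hij : i ≠ j) (hkl : k ≠ l) (ε₁ ε₂ : ZMod 2),
          i ≠ k ∧ i ≠ l ∧ j ≠ k ∧ j ≠ l ∧
          r = FreeGroup.of (mkPair i j hij, ε₁) * FreeGroup.of (mkPair k l hkl, ε₂) *
              (FreeGroup.of (mkPair i j hij, ε₁))⁻¹ * (FreeGroup.of (mkPair k l hkl, ε₂))⁻¹) ∨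
       (∃ (i j k : Fin n) (hij : i ≠ j) (hik : i ≠ k) (hjk : j ≠ k)
          (εij εik εjk : ZMod 2), εij + εik + εjk = 0 ∧
          r = FreeGroup.of (mkPair i j hij, εij) * FreeGroup.of (mkPair i k hik, εik) *
              FreeGroup.of (mkPair j k hjk, εjk) *
              (FreeGroup.of (mkPair j k hjk, εjk) * FreeGroup.of (mkPair i k hik, εik) *
               FreeGroup.of (mkPair i j hij, εij))⁻¹)}

/-- The group `G_{n,P}^2`. -/
abbrev GnP2 (n : ℕ) := PresentedGroup (gnP2Rels n)

/-- The generator `a_{ij}^ε` of `G_{n,P}^2`. -/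
def AP {n : ℕ} (i j : Fin n) (h : i ≠ j) (ε : ZMod 2) : GnP2 n :=
  PresentedGroup.of (mkPair i j h, ε)

/-- Alphabet of `G_{n,D}^2`: crossing generators `a_{ij}` and point generators `τ_i`. -/
abbrev DIdx (n : ℕ) := PairIdx n ⊕ Fin n

/-- Relations of the group `G_{n,D}^2` (`G_n^2` with points). -/
def gnD2Rels (n : ℕ) : Set (FreeGroup (DIdx n)) :=
  {r | (∃ (i j : Fin n) (h : i ≠ j),
          r = FreeGroup.of (Sum.inl (mkPair i j h) : DIdx n) *
              FreeGroup.of (Sum.inl (mkPair i j h) : DIdx n)) ∨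
       (∃ (i j k l : Fin n) (hij : i ≠ j) (hkl : k ≠ l),
          i ≠ k ∧ i ≠ l ∧ j ≠ k ∧ j ≠ l ∧
          r = FreeGroup.of (Sum.inl (mkPair i j hij) : DIdx n) *
              FreeGroup.of (Sum.inl (mkPair k l hkl) : DIdx n) *
              (FreeGroup.of (Sum.inl (mkPair i j hij) : DIdx n))⁻¹ *
              (FreeGroup.of (Sum.inl (mkPair k l hkl) : DIdx n))⁻¹) ∨
       (∃ (i j k : Fin n) (hij : i ≠ j) (hik : i ≠ k) (hjk : j ≠ k),
          r = FreeGroup.of (Sum.inl (mkPair i j hij) : DIdx n) *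
              FreeGroup.of (Sum.inl (mkPair i k hik) : DIdx n) *
              FreeGroup.of (Sum.inl (mkPair j k hjk) : DIdx n) *
              (FreeGroup.of (Sum.inl (mkPair j k hjk) : DIdx n) *
               FreeGroup.of (Sum.inl (mkPair i k hik) : DIdx n) *
               FreeGroup.of (Sum.inl (mkPair i j hij) : DIdx n))⁻¹) ∨
       (∃ i : Fin n,
          r = FreeGroup.of (Sum.inr i : DIdx n) * FreeGroup.of (Sum.inr i : DIdx n)) ∨
       (∃ i j : Fin n,
          r = FreeGroup.of (Sum.inr i : DIdx n) * FreeGroup.of (Sum.inr j : DIdx n) *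
              (FreeGroup.of (Sum.inr i : DIdx n))⁻¹ * (FreeGroup.of (Sum.inr j : DIdx n))⁻¹) ∨
       (∃ (i j : Fin n) (h : i ≠ j),
          r = FreeGroup.of (Sum.inr i : DIdx n) * FreeGroup.of (Sum.inr j : DIdx n) *
              FreeGroup.of (Sum.inl (mkPair i j h) : DIdx n) *
              FreeGroup.of (Sum.inr j : DIdx n) * FreeGroup.of (Sum.inr i : DIdx n) *
              (FreeGroup.of (Sum.inl (mkPair i j h) : DIdx n))⁻¹) ∨
       (∃ (i j k : Fin n) (h : i ≠ j), k ≠ i ∧ k ≠ j ∧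
          r = FreeGroup.of (Sum.inl (mkPair i j h) : DIdx n) *
              FreeGroup.of (Sum.inr k : DIdx n) *
              (FreeGroup.of (Sum.inl (mkPair i j h) : DIdx n))⁻¹ *
              (FreeGroup.of (Sum.inr k : DIdx n))⁻¹)}

/-- The group `G_{n,D}^2`. -/
abbrev GnD2 (n : ℕ) := PresentedGroup (gnD2Rels n)

/-- The generator `a_{ij}` of `G_{n,D}^2`. -/
def AD {n : ℕ} (i j : Fin n) (h : i ≠ j) : GnD2 n := PresentedGroup.of (Sum.inl (mkPair i j h))

/-- The generator `τ_i` of `G_{n,D}^2`. -/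
def T {n : ℕ} (i : Fin n) : GnD2 n := PresentedGroup.of (Sum.inr i)


section Aux

lemma mk_rel_eq_one {α : Type*} {rels : Set (FreeGroup α)} {r : FreeGroup α} (hr : r ∈ rels) :
    PresentedGroup.mk rels r = 1 :=
  (QuotientGroup.eq_one_iff r).mpr (Subgroup.subset_normalClosure hr)

variable {n : ℕ}

lemma mkPair_comm {i j : Fin n} (h : i ≠ j) : mkPair i j h = mkPair j i h.symm :=
  Subtype.ext (Finset.pair_comm i j)

lemma AD_congr {i j i' j' : Fin n} (h : i ≠ j) (h' : i' ≠ j') (e1 : i = i') (e2 : j = j') :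
    AD i j h = AD i' j' h' := by subst e1; subst e2; rfl

lemma AD_symm (i j : Fin n) (h : i ≠ j) : AD i j h = AD j i h.symm := by
  unfold AD; rw [mkPair_comm]

lemma AD_sq (i j : Fin n) (h : i ≠ j) : AD i j h * AD i j h = 1 := by
  have H := mk_rel_eq_one (rels := gnD2Rels n) (Or.inl ⟨i, j, h, rfl⟩)
  simpa [AD, PresentedGroup.of] using H

lemma AD_comm {i j k l : Fin n} (hij : i ≠ j) (hkl : k ≠ l)
    (hik : i ≠ k) (hil : i ≠ l) (hjk : j ≠ k) (hjl : j ≠ l) :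
    AD i j hij * AD k l hkl = AD k l hkl * AD i j hij := by
  have H := mk_rel_eq_one (rels := gnD2Rels n)
    (Or.inr (Or.inl ⟨i, j, k, l, hij, hkl, hik, hil, hjk, hjl, rfl⟩))
  simp only [map_mul, map_inv] at H
  rw [mul_inv_eq_one, mul_inv_eq_iff_eq_mul] at H
  exact H

lemma AD_triple {i j k : Fin n} (hij : i ≠ j) (hik : i ≠ k) (hjk : j ≠ k) :
    AD i j hij * AD i k hik * AD j k hjk = AD j k hjk * AD i k hik * AD i j hij := by
  have H := mk_rel_eq_one (rels := gnD2Rels n)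
    (Or.inr (Or.inr (Or.inl ⟨i, j, k, hij, hik, hjk, rfl⟩)))
  simp only [map_mul, map_inv] at H
  rw [mul_inv_eq_one] at H
  exact H

lemma T_sq (i : Fin n) : T i * T i = 1 := by
  have H := mk_rel_eq_one (rels := gnD2Rels n)
    (Or.inr (Or.inr (Or.inr (Or.inl ⟨i, rfl⟩))))
  simpa [T, PresentedGroup.of] using H

lemma T_comm (i j : Fin n) : T i * T j = T j * T i := by
  have H := mk_rel_eq_one (rels := gnD2Rels n)
    (Or.inr (Or.inr (Or.inr (Or.inr (Or.inl ⟨i, j, rfl⟩)))))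
  simp only [map_mul, map_inv] at H
  rw [mul_inv_eq_one, mul_inv_eq_iff_eq_mul] at H
  exact H

lemma TT_AD (i j : Fin n) (h : i ≠ j) :
    T i * T j * AD i j h * T j * T i = AD i j h := by
  have H := mk_rel_eq_one (rels := gnD2Rels n)
    (Or.inr (Or.inr (Or.inr (Or.inr (Or.inr (Or.inl ⟨i, j, h, rfl⟩))))))
  simp only [map_mul, map_inv] at H
  rw [mul_inv_eq_one] at H
  exact H

lemma AD_T_comm (i j : Fin n) (h : i ≠ j) (k : Fin n) (hki : k ≠ i) (hkj : k ≠ j) :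
    AD i j h * T k = T k * AD i j h := by
  have H := mk_rel_eq_one (rels := gnD2Rels n)
    (Or.inr (Or.inr (Or.inr (Or.inr (Or.inr (Or.inr ⟨i, j, k, h, hki, hkj, rfl⟩))))))
  simp only [map_mul, map_inv] at H
  rw [mul_inv_eq_one, mul_inv_eq_iff_eq_mul] at H
  exact H

/-- Abstract consequences of the `τ`-relations. -/
lemma invol_helper {G : Type*} [Group G] {p q a : G} (hp : p * p = 1) (hq : q * q = 1)
    (hpq : p * q = q * p) (key : p * q * a * q * p = a) :
    p * q * a = a * q * p ∧ a * p * q = q * p * a ∧ p * a * q = q * a * p := by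
  have e1 : (p * q) * (a * (q * p)) = a := by
    calc (p * q) * (a * (q * p)) = p * q * a * q * p := by group
    _ = a := key
  have e2 : (q * p) * (p * q) = 1 := by
    rw [mul_assoc, ← mul_assoc p p q, hp, one_mul, hq]
  have comm : a * (p * q) = (p * q) * a := by
    calc a * (p * q) = ((p * q) * (a * (q * p))) * (p * q) := by rw [e1]
    _ = (p * q) * (a * ((q * p) * (p * q))) := by group
    _ = (p * q) * a := by rw [e2, mul_one]
  have e1' : (q * p) * (a * (q * p)) = a := by rw [hpq] at e1; exact e1
  refine ⟨?_, ?_, ?_⟩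
  · calc p * q * a = a * (p * q) := comm.symm
    _ = a * (q * p) := by rw [hpq]
    _ = a * q * p := by rw [mul_assoc]
  · calc a * p * q = a * (p * q) := by rw [mul_assoc]
    _ = (p * q) * a := comm
    _ = (q * p) * a := by rw [hpq]
  · have : q * a * p = p * a * q := by
      calc q * a * p = q * ((q * p) * (a * (q * p))) * p := by rw [e1']
      _ = (q * q) * (p * (a * (q * (p * p)))) := by group
      _ = p * (a * (q * 1)) := by rw [hq, hp, one_mul]
      _ = p * a * q := by rw [mul_one, ← mul_assoc]
    exact this.symm

lemma castPred_ne {i j : Fin (n + 1)} (hi : i ≠ Fin.last n) (hj : j ≠ Fin.last n)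
    (h : i ≠ j) : i.castPred hi ≠ j.castPred hj := fun e =>
  h (by rw [← Fin.castSucc_castPred i hi, ← Fin.castSucc_castPred j hj, e])

/-- The value of `ω` on the generator indexed by the ordered pair `(i, j)`. -/
def Dgen (n : ℕ) (i j : Fin (n + 1)) : GnD2 n :=
  if hi : i = Fin.last n then
    (if hj : j = Fin.last n then 1 else T (j.castPred hj))
  else if hj : j = Fin.last n then T (i.castPred hi)
  else if hne : i.castPred hi = j.castPred hj then 1
  else AD (i.castPred hi) (j.castPred hj) hne

lemma Dgen_symm (i j : Fin (n + 1)) (h : i ≠ j) : Dgen n i j = Dgen n j i := by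
  unfold Dgen
  by_cases hi : i = Fin.last n <;> by_cases hj : j = Fin.last n
  · exact absurd (hi.trans hj.symm) h
  · simp [hi, hj]
  · simp [hi, hj]
  · have hc := castPred_ne hi hj h
    simp only [dif_neg hi, dif_neg hj, dif_neg hc, dif_neg (Ne.symm hc)]
    exact AD_symm _ _ hc

lemma Dgen_castSucc (i j : Fin n) (h : i ≠ j) :
    Dgen n i.castSucc j.castSucc = AD i j h := by
  have hi : i.castSucc ≠ Fin.last n := (Fin.castSucc_lt_last i).ne
  have hj : j.castSucc ≠ Fin.last n := (Fin.castSucc_lt_last j).ne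
  have hc : i.castSucc.castPred hi ≠ j.castSucc.castPred hj :=
    castPred_ne hi hj (by simpa [Fin.castSucc_inj] using h)
  unfold Dgen
  simp only [dif_neg hi, dif_neg hj, dif_neg hc]
  exact AD_congr hc h (Fin.castPred_castSucc) (Fin.castPred_castSucc)

lemma Dgen_last (i : Fin n) : Dgen n i.castSucc (Fin.last n) = T i := by
  have hi : i.castSucc ≠ Fin.last n := (Fin.castSucc_lt_last i).ne
  unfold Dgen
  simp only [dif_neg hi, dif_pos rfl]
  simp [Fin.castPred_castSucc]

lemma Dgen_sq {i j : Fin (n + 1)} (h : i ≠ j) : Dgen n i j * Dgen n i j = 1 := by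
  unfold Dgen
  by_cases hi : i = Fin.last n <;> by_cases hj : j = Fin.last n
  · exact absurd (hi.trans hj.symm) h
  · simp only [dif_pos hi, dif_neg hj]; exact T_sq _
  · simp only [dif_neg hi, dif_pos hj]; exact T_sq _
  · have hc := castPred_ne hi hj h
    simp only [dif_neg hi, dif_neg hj, dif_neg hc]
    exact AD_sq _ _ hc

lemma Dgen_comm {i j k l : Fin (n + 1)} (hij : i ≠ j) (hkl : k ≠ l)
    (hik : i ≠ k) (hil : i ≠ l) (hjk : j ≠ k) (hjl : j ≠ l) :
    Dgen n i j * Dgen n k l = Dgen n k l * Dgen n i j := by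
  unfold Dgen
  by_cases hi : i = Fin.last n
  · have hj : j ≠ Fin.last n := fun e => hij (hi.trans e.symm)
    have hk : k ≠ Fin.last n := fun e => hik (hi.trans e.symm)
    have hl : l ≠ Fin.last n := fun e => hil (hi.trans e.symm)
    have hc := castPred_ne hk hl hkl
    simp only [dif_pos hi, dif_neg hj, dif_neg hk, dif_neg hl, dif_neg hc]
    exact (AD_T_comm _ _ hc _ (castPred_ne hj hk hjk) (castPred_ne hj hl hjl)).symm
  · by_cases hj : j = Fin.last n
    · have hk : k ≠ Fin.last n := fun e => hjk (hj.trans e.symm)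
      have hl : l ≠ Fin.last n := fun e => hjl (hj.trans e.symm)
      have hc := castPred_ne hk hl hkl
      simp only [dif_neg hi, dif_pos hj, dif_neg hk, dif_neg hl, dif_neg hc]
      exact (AD_T_comm _ _ hc _ (castPred_ne hi hk hik) (castPred_ne hi hl hil)).symm
    · have hcij := castPred_ne hi hj hij
      by_cases hk : k = Fin.last n
      · have hl : l ≠ Fin.last n := fun e => hkl (hk.trans e.symm)
        simp only [dif_neg hi, dif_neg hj, dif_neg hcij, dif_pos hk, dif_neg hl]
        exact AD_T_comm _ _ hcij _ (castPred_ne hl hi (fun e => hil e.symm))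
          (castPred_ne hl hj (fun e => hjl e.symm))
      · by_cases hl : l = Fin.last n
        · simp only [dif_neg hi, dif_neg hj, dif_neg hcij, dif_neg hk, dif_pos hl]
          exact AD_T_comm _ _ hcij _ (castPred_ne hk hi (fun e => hik e.symm))
            (castPred_ne hk hj (fun e => hjk e.symm))
        · have hckl := castPred_ne hk hl hkl
          simp only [dif_neg hi, dif_neg hj, dif_neg hcij, dif_neg hk, dif_neg hl, dif_neg hckl]
          exact AD_comm hcij hckl (castPred_ne hi hk hik) (castPred_ne hi hl hil)
            (castPred_ne hj hk hjk) (castPred_ne hj hl hjl)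

lemma Dgen_triple {i j k : Fin (n + 1)} (hij : i ≠ j) (hik : i ≠ k) (hjk : j ≠ k) :
    Dgen n i j * Dgen n i k * Dgen n j k = Dgen n j k * Dgen n i k * Dgen n i j := by
  unfold Dgen
  by_cases hi : i = Fin.last n
  · have hj : j ≠ Fin.last n := fun e => hij (hi.trans e.symm)
    have hk : k ≠ Fin.last n := fun e => hik (hi.trans e.symm)
    have hc := castPred_ne hj hk hjk
    simp only [dif_pos hi, dif_neg hj, dif_neg hk, dif_neg hc]
    exact (invol_helper (T_sq _) (T_sq _) (T_comm _ _) (TT_AD _ _ hc)).1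
  · by_cases hj : j = Fin.last n
    · have hk : k ≠ Fin.last n := fun e => hjk (hj.trans e.symm)
      have hc := castPred_ne hi hk hik
      simp only [dif_neg hi, dif_pos hj, dif_neg hk, dif_neg hc]
      exact (invol_helper (T_sq _) (T_sq _) (T_comm _ _) (TT_AD _ _ hc)).2.2
    · have hcij := castPred_ne hi hj hij
      by_cases hk : k = Fin.last n
      · simp only [dif_neg hi, dif_neg hj, dif_neg hcij, dif_pos hk]
        exact (invol_helper (T_sq _) (T_sq _) (T_comm _ _) (TT_AD _ _ hcij)).2.1
      · have hcik := castPred_ne hi hk hik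
        have hcjk := castPred_ne hj hk hjk
        simp only [dif_neg hi, dif_neg hj, dif_neg hcij, dif_neg hk, dif_neg hcik, dif_neg hcjk]
        exact AD_triple hcij hcik hcjk

lemma PairIdx.nonem (s : PairIdx n) : s.1.Nonempty :=
  Finset.card_pos.mp (by rw [s.2]; norm_num)

/-- The map on generators. -/
def fGen (n : ℕ) (s : PairIdx (n + 1)) : GnD2 n :=
  Dgen n (s.1.min' (PairIdx.nonem s)) (s.1.max' (PairIdx.nonem s))

lemma min'_pair {m : ℕ} {i j : Fin m} (hlt : i < j)
    (hne : ({i, j} : Finset (Fin m)).Nonempty) : Finset.min' {i, j} hne = i := by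
  refine le_antisymm (Finset.min'_le _ _ (by simp)) ?_
  rcases Finset.mem_insert.mp (Finset.min'_mem ({i, j} : Finset (Fin m)) hne) with h | h
  · exact le_of_eq h.symm
  · rw [Finset.mem_singleton] at h
    rw [h]; exact hlt.le

lemma max'_pair {m : ℕ} {i j : Fin m} (hlt : i < j)
    (hne : ({i, j} : Finset (Fin m)).Nonempty) : Finset.max' {i, j} hne = j := by
  refine le_antisymm ?_ (Finset.le_max' _ _ (by simp))
  rcases Finset.mem_insert.mp (Finset.max'_mem ({i, j} : Finset (Fin m)) hne) with h | h
  · rw [h]; exact hlt.le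
  · rw [Finset.mem_singleton] at h
    exact le_of_eq h

lemma fGen_mkPair_lt {i j : Fin (n + 1)} (hlt : i < j) (h : i ≠ j) :
    fGen n (mkPair i j h) = Dgen n i j := by
  unfold fGen mkPair
  simp only
  rw [min'_pair hlt, max'_pair hlt]

lemma fGen_mkPair {i j : Fin (n + 1)} (h : i ≠ j) :
    fGen n (mkPair i j h) = Dgen n i j := by
  rcases h.lt_or_gt with hlt | hlt
  · exact fGen_mkPair_lt hlt h
  · rw [mkPair_comm h, fGen_mkPair_lt hlt h.symm, Dgen_symm _ _ h.symm]

end Aux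

/-- the assignment `ω(a_{ij}) = a_{ij}` for `i,j ≤ n`, `ω(a_{i(n+1)}) = τ_i`,
extends to a well-defined homomorphism `ω : G_{n+1}^2 → G_{n,D}^2`. -/
theorem stmt10 (n : ℕ) (hn : 2 < n) :
    ∃ ω : Gn2 (n + 1) →* GnD2 n,
      (∀ (i j : Fin n) (h : i ≠ j),
        ω (A2 i.castSucc j.castSucc ((Fin.castSucc_injective n).ne h)) = AD i j h) ∧
      (∀ i : Fin n,
        ω (A2 i.castSucc (Fin.last n) (Fin.castSucc_lt_last i).ne) = T i) := by
  
  have hrel : ∀ r ∈ gn2Rels (n + 1), FreeGroup.lift (fGen n) r = 1 := by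
    intro r hr
    rcases hr with ⟨i, j, h, rfl⟩ | ⟨i, j, k, l, hij, hkl, hik, hil, hjk, hjl, rfl⟩ |
      ⟨i, j, k, hij, hik, hjk, rfl⟩
    · simp only [map_mul, FreeGroup.lift_apply_of, fGen_mkPair]
      exact Dgen_sq h
    · simp only [map_mul, map_inv, FreeGroup.lift_apply_of, fGen_mkPair]
      rw [mul_inv_eq_one, mul_inv_eq_iff_eq_mul]
      exact Dgen_comm hij hkl hik hil hjk hjl
    · simp only [map_mul, map_inv, FreeGroup.lift_apply_of, fGen_mkPair]
      rw [mul_inv_eq_one]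
      exact Dgen_triple hij hik hjk
  refine ⟨PresentedGroup.toGroup hrel, ?_, ?_⟩
  · intro i j h
    show PresentedGroup.toGroup hrel (PresentedGroup.of _) = _
    rw [PresentedGroup.toGroup.of, fGen_mkPair]
    exact Dgen_castSucc i j h
  · intro i
    show PresentedGroup.toGroup hrel (PresentedGroup.of _) = _
    rw [PresentedGroup.toGroup.of, fGen_mkPair]
    exact Dgen_last i
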